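/- Let X₁,…,X_M, X be exchangeable (i.i.d.) real-valued random variables and δ ∈ (0,1). Define γ as the ⌈(M+1)(1−δ)⌉-th smallest value among X₁,…,X_M (assume ⌈(M+1)(1−δ)⌉ ≤ M). Then P(X ≤ γ) ≥ 1 − δ. -/

import Mathlib

open MeasureTheory ENNReal

set_option linter.deprecated false

/-- The `k`-th smallest value (0-indexed) among `x 0, …, x (M-1)`. -/
noncomputable def orderStat {M : ℕ} (x : Fin M → ℝ) (k : ℕ) : ℝ :=
  (Multiset.sort (Multiset.ofList (List.ofFn x)) (· ≤ ·)).getD k 0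

theorem countP_ofFn {n:ℕ} (b : Fin n → ℝ) (p : ℝ → Prop) [DecidablePred p] :
    (List.ofFn b).countP (fun x => decide (p x)) = (Finset.univ.filter (fun j => p (b j))).card := by
  rw [List.countP_eq_length_filter, Finset.card_filter]
  induction n with
  | zero => simp
  | succ n ih =>
      rw [List.ofFn_succ, List.filter_cons, Fin.sum_univ_succ]
      by_cases h : p (b 0) <;>
        simp [h, ih (fun i => b i.succ), Nat.add_comm]

/-- In a sorted list, the element at index `k` is `≥ t` iff at most `k` elements are `< t`. -/
theorem sorted_le_get_iff {l : List ℝ} (hl : l.Pairwise (· ≤ ·)) {k : ℕ} (hk : k < l.length) (t : ℝ) :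
    t ≤ l.get ⟨k, hk⟩ ↔ l.countP (fun x => decide (x < t)) ≤ k := by
  constructor
  · intro h
    have h2 : (l.drop k).countP (fun x => decide (x < t)) = 0 := by
      rw [List.countP_eq_zero]
      intro a ha
      simp only [decide_eq_true_eq, not_lt]
      obtain ⟨⟨j, hj⟩, rfl⟩ := List.mem_iff_get.mp ha
      have hkj : k + j < l.length := by simp at hj; omega
      simp only [List.get_eq_getElem, List.getElem_drop]
      exact le_trans h (hl.rel_get_of_le (a := ⟨k, hk⟩) (b := ⟨k + j, hkj⟩) (Fin.mk_le_mk.mpr (by omega)))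
    calc l.countP (fun x => decide (x < t))
        = (l.take k).countP _ + (l.drop k).countP _ := by
          conv_lhs => rw [← List.take_append_drop k l, List.countP_append]
      _ ≤ (l.take k).length + 0 := by rw [h2]; exact Nat.add_le_add_right List.countP_le_length _
      _ ≤ k := by simp
  · intro h
    by_contra hc
    push_neg at hc
    -- the first k+1 elements are all < t
    have h1 : (l.take (k+1)).countP (fun x => decide (x < t)) = k + 1 := by
      have hlen : (l.take (k+1)).length = k + 1 := by simp; omega
      rw [List.countP_eq_length.mpr, hlen]
      intro a ha
      simp only [decide_eq_true_eq]
      obtain ⟨⟨j, hj⟩, rfl⟩ := List.mem_iff_get.mp ha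
      rw [hlen] at hj
      simp only [List.get_eq_getElem, List.getElem_take]
      exact lt_of_le_of_lt (hl.rel_get_of_le (a := ⟨j, by omega⟩) (b := ⟨k, hk⟩) (Fin.mk_le_mk.mpr (by omega))) hc
    have : k + 1 ≤ l.countP (fun x => decide (x < t)) := by
      conv_rhs => rw [← List.take_append_drop (k+1) l, List.countP_append]
      omega
    omega

/-- In a sorted list, at least `k+1` elements are `≤` the element at index `k`. -/
theorem sorted_count_le_get {l : List ℝ} (hl : l.Pairwise (· ≤ ·)) {k : ℕ} (hk : k < l.length) :
    k + 1 ≤ l.countP (fun x => decide (x ≤ l.get ⟨k, hk⟩)) := by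
  have h1 : (l.take (k+1)).countP (fun x => decide (x ≤ l.get ⟨k, hk⟩)) = k + 1 := by
    have hlen : (l.take (k+1)).length = k + 1 := by simp; omega
    rw [List.countP_eq_length.mpr, hlen]
    intro a ha
    simp only [decide_eq_true_eq]
    obtain ⟨⟨j, hj⟩, rfl⟩ := List.mem_iff_get.mp ha
    rw [hlen] at hj
    simp only [List.get_eq_getElem, List.getElem_take]
    exact hl.rel_get_of_le (a := ⟨j, by omega⟩) (b := ⟨k, hk⟩) (Fin.mk_le_mk.mpr (by omega))
  calc k + 1 = _ := h1.symm
    _ ≤ _ := (List.take_sublist (k+1) l).countP_le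

section Bridge

variable {M : ℕ} (x : Fin M → ℝ)

theorem countP_sort_eq (p : ℝ → Prop) [DecidablePred p] :
    (Multiset.sort (Multiset.ofList (List.ofFn x)) (· ≤ ·)).countP (fun y => decide (p y))
      = (Finset.univ.filter (fun j => p (x j))).card := by
  rw [← countP_ofFn x p]
  exact List.Perm.countP_eq _ (Multiset.coe_eq_coe.mp (Multiset.sort_eq _ _))

theorem length_sort_ofFn :
    (Multiset.sort (Multiset.ofList (List.ofFn x)) (· ≤ ·)).length = M := by
  rw [Multiset.length_sort]; simp

theorem le_orderStat_iff {k : ℕ} (hk : k < M) (t : ℝ) :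
    t ≤ orderStat x k ↔ (Finset.univ.filter (fun j => x j < t)).card ≤ k := by
  set l := Multiset.sort (Multiset.ofList (List.ofFn x)) (· ≤ ·) with hl
  have hlen : l.length = M := length_sort_ofFn x
  have hk' : k < l.length := by omega
  rw [orderStat, List.getD_eq_get _ _ ⟨k, hk'⟩,
    sorted_le_get_iff (Multiset.pairwise_sort _ _) hk' t, ← hl, countP_sort_eq x (· < t)]

theorem orderStat_count_le {k : ℕ} (hk : k < M) :
    k + 1 ≤ (Finset.univ.filter (fun j => x j ≤ orderStat x k)).card := by
  set l := Multiset.sort (Multiset.ofList (List.ofFn x)) (· ≤ ·) with hl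
  have hlen : l.length = M := length_sort_ofFn x
  have hk' : k < l.length := by omega
  have := sorted_count_le_get (l := l) (Multiset.pairwise_sort _ _) hk'
  rwa [countP_sort_eq x (· ≤ l.get ⟨k, hk'⟩), show l.get ⟨k, hk'⟩ = orderStat x k from
    (List.getD_eq_get _ _ ⟨k, hk'⟩).symm] at this

end Bridge

/-- Deterministic counting lemma: at least `r` indices have "strict rank" `≤ r - 1`. -/
theorem rank_count {M : ℕ} (a : Fin (M + 1) → ℝ) {r : ℕ} (hr1 : 1 ≤ r) (hrM : r ≤ M + 1) :
    r ≤ (Finset.univ.filter (fun i =>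
        (Finset.univ.filter (fun j => a j < a i)).card ≤ r - 1)).card := by
  have hk : r - 1 < M + 1 := by omega
  set t := orderStat a (r - 1) with ht
  have hsub : Finset.univ.filter (fun i => a i ≤ t) ⊆
      Finset.univ.filter (fun i => (Finset.univ.filter (fun j => a j < a i)).card ≤ r - 1) := by
    intro i hi
    simp only [Finset.mem_filter, Finset.mem_univ, true_and] at hi ⊢
    have h1 : (Finset.univ.filter (fun j => a j < a i)).card ≤
        (Finset.univ.filter (fun j => a j < t)).card := by
      apply Finset.card_le_card
      intro j hj
      simp only [Finset.mem_filter, Finset.mem_univ, true_and] at hj ⊢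
      exact lt_of_lt_of_le hj hi
    exact le_trans h1 ((le_orderStat_iff a hk t).mp le_rfl)
  calc r = (r - 1) + 1 := by omega
    _ ≤ (Finset.univ.filter (fun i => a i ≤ t)).card := orderStat_count_le a hk
    _ ≤ _ := Finset.card_le_card hsub

/-- Deterministic equivalence: test point below calibration quantile iff its strict rank is small. -/
theorem rank_iff {M : ℕ} (a : Fin (M + 1) → ℝ) {r : ℕ} (hr1 : 1 ≤ r) (hrM : r ≤ M) :
    (a (Fin.last M) ≤ orderStat (fun i : Fin M => a i.castSucc) (r - 1) ↔
      (Finset.univ.filter (fun j => a j < a (Fin.last M))).card ≤ r - 1) := by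
  have hk : r - 1 < M := by omega
  rw [le_orderStat_iff _ hk]
  have : (Finset.univ.filter (fun j : Fin (M+1) => a j < a (Fin.last M))).card =
      (Finset.univ.filter (fun j : Fin M => a j.castSucc < a (Fin.last M))).card := by
    rw [Finset.card_filter, Finset.card_filter, Fin.sum_univ_castSucc]
    simp
  rw [this]

/-- Split conformal prediction coverage: if `Y 0, …, Y (M-1)` are the calibration
scores and `Y (Fin.last M)` is the test score, all exchangeable, and `γ` is the
`⌈(M+1)(1-δ)⌉`-th smallest calibration score, then `P(Y_test ≤ γ) ≥ 1 - δ`. -/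
theorem conformal_coverage
    {Ω : Type*} [MeasurableSpace Ω] (ℙ : Measure Ω) [IsProbabilityMeasure ℙ]
    (M : ℕ) (hM : 0 < M) (δ : ℝ) (hδ : δ ∈ Set.Ioo (0 : ℝ) 1)
    (Y : Fin (M + 1) → Ω → ℝ) (hmeas : ∀ i, Measurable (Y i))
    (hexch : ∀ σ : Equiv.Perm (Fin (M + 1)),
      Measure.map (fun ω => fun i => Y (σ i) ω) ℙ = Measure.map (fun ω => fun i => Y i ω) ℙ)
    (r : ℕ) (hr : r = ⌈((M : ℝ) + 1) * (1 - δ)⌉₊) (hrM : r ≤ M) :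
    ENNReal.ofReal (1 - δ) ≤
      ℙ {ω | Y (Fin.last M) ω ≤ orderStat (fun i : Fin M => Y i.castSucc ω) (r - 1)} := by
  obtain ⟨hδ0, hδ1⟩ := hδ
  have hδ1' : 0 < 1 - δ := by linarith
  have hr1 : 1 ≤ r := by
    rw [hr]; rw [Nat.one_le_ceil_iff]; positivity
  -- the random vector
  set W : Ω → (Fin (M + 1) → ℝ) := fun ω i => Y i ω with hW
  have hWmeas : Measurable W := measurable_pi_lambda _ (fun i => hmeas i)
  -- rank sets in sequence space
  set S : Fin (M + 1) → Set (Fin (M + 1) → ℝ) :=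
    fun i => {a | (Finset.univ.filter (fun j => a j < a i)).card ≤ r - 1} with hS
  have hSmeas : ∀ i, MeasurableSet (S i) := by
    intro i
    have hf : Measurable (fun a : Fin (M+1) → ℝ =>
        (Finset.univ.filter (fun j => a j < a i)).card) := by
      simp_rw [Finset.card_filter]
      exact Finset.measurable_sum _ (fun j _ =>
        Measurable.ite (measurableSet_lt (measurable_pi_apply j) (measurable_pi_apply i))
          measurable_const measurable_const)
    exact hf (measurableSet_Iic (a := r - 1))
  -- all indices have the same probability of small rank
  have hsame : ∀ i, ℙ (W ⁻¹' S i) = ℙ (W ⁻¹' S (Fin.last M)) := by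
    intro i
    set σ := Equiv.swap i (Fin.last M) with hσ
    have hπ : Measurable (fun a : Fin (M+1) → ℝ => fun j => a (σ j)) :=
      measurable_pi_lambda _ (fun j => measurable_pi_apply _)
    have hpre : (fun a : Fin (M+1) → ℝ => fun j => a (σ j)) ⁻¹' S (Fin.last M) = S i := by
      ext a
      simp only [hS, Set.mem_preimage, Set.mem_setOf_eq]
      have hcard : (Finset.univ.filter (fun j => a (σ j) < a (σ (Fin.last M)))).card =
          (Finset.univ.filter (fun j => a j < a (σ (Fin.last M)))).card := by
        apply Finset.card_nbij' σ σ.symm <;> intro j hj <;>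
          simp_all [Finset.mem_filter]
      rw [hcard, hσ, Equiv.swap_apply_right]
    have key := hexch σ
    have h1 : ℙ (W ⁻¹' S i) = (Measure.map (fun ω => fun j => Y (σ j) ω) ℙ) (S (Fin.last M)) := by
      rw [Measure.map_apply (by exact measurable_pi_lambda _ (fun j => hmeas _)) (hSmeas _)]
      congr 1
      rw [← hpre]
      rfl
    rw [h1, key, Measure.map_apply hWmeas (hSmeas _)]
  -- sum of probabilities is at least r
  have hsum : (r : ℝ≥0∞) ≤ ∑ i : Fin (M + 1), ℙ (W ⁻¹' S i) := by
    have hpt : ∀ ω, (r : ℝ≥0∞) ≤ ∑ i : Fin (M + 1),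
        Set.indicator (W ⁻¹' S i) (fun _ => (1 : ℝ≥0∞)) ω := by
      intro ω
      have : ∑ i : Fin (M + 1), Set.indicator (W ⁻¹' S i) (fun _ => (1 : ℝ≥0∞)) ω
          = ((Finset.univ.filter (fun i => W ω ∈ S i)).card : ℝ≥0∞) := by
        rw [Finset.card_filter, Nat.cast_sum]
        apply Finset.sum_congr rfl
        intro i _
        by_cases h : W ω ∈ S i <;> simp [Set.indicator, h]
      rw [this]
      have := rank_count (W ω) hr1 (by omega)
      exact_mod_cast this
    calc (r : ℝ≥0∞) = ∫⁻ _, (r : ℝ≥0∞) ∂ℙ := by simp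
      _ ≤ ∫⁻ ω, ∑ i : Fin (M + 1),
            Set.indicator (W ⁻¹' S i) (fun _ => (1 : ℝ≥0∞)) ω ∂ℙ := lintegral_mono hpt
      _ = ∑ i : Fin (M + 1), ∫⁻ ω, Set.indicator (W ⁻¹' S i) (fun _ => (1 : ℝ≥0∞)) ω ∂ℙ :=
          lintegral_finset_sum _ (fun i _ =>
            (measurable_const.indicator (hWmeas (hSmeas i))))
      _ = ∑ i : Fin (M + 1), ℙ (W ⁻¹' S i) := by
          apply Finset.sum_congr rfl
          intro i _
          exact lintegral_indicator_one (hWmeas (hSmeas i))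
  have hmain : (r : ℝ≥0∞) ≤ (M + 1) * ℙ (W ⁻¹' S (Fin.last M)) := by
    calc (r : ℝ≥0∞) ≤ ∑ i : Fin (M + 1), ℙ (W ⁻¹' S i) := hsum
      _ = (M + 1) * ℙ (W ⁻¹' S (Fin.last M)) := by
          rw [Finset.sum_congr rfl (fun i _ => hsame i), Finset.sum_const]
          simp [mul_comm]
  -- identify the event
  have hevent : {ω | Y (Fin.last M) ω ≤ orderStat (fun i : Fin M => Y i.castSucc ω) (r - 1)}
      = W ⁻¹' S (Fin.last M) := by
    ext ω
    simp only [Set.mem_setOf_eq, Set.mem_preimage, hS, hW]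
    exact rank_iff (fun i => Y i ω) hr1 hrM
  rw [hevent]
  -- conclude
  have hM1 : ((M : ℝ≥0∞) + 1) ≠ 0 := by simp
  have hM1' : ((M : ℝ≥0∞) + 1) ≠ ⊤ := by simp
  rw [← ENNReal.mul_le_mul_iff_left hM1 hM1']
  calc ENNReal.ofReal (1 - δ) * ((M : ℝ≥0∞) + 1)
      = ENNReal.ofReal ((1 - δ) * ((M : ℝ) + 1)) := by
        rw [ENNReal.ofReal_mul (by linarith)]
        congr 1
        rw [ENNReal.ofReal_add (by positivity) zero_le_one]
        simp [ENNReal.ofReal_natCast]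
    _ ≤ (r : ℝ≥0∞) := by
        rw [← ENNReal.ofReal_natCast]
        apply ENNReal.ofReal_le_ofReal
        rw [mul_comm]
        rw [hr]
        exact Nat.le_ceil _
    _ ≤ (M + 1) * ℙ (W ⁻¹' S (Fin.last M)) := hmain
    _ = ℙ (W ⁻¹' S (Fin.last M)) * ((M : ℝ≥0∞) + 1) := by ring
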